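/- Let O be a valuation ring with fraction field K, and let L be an algebraic field extension of K. Then the integral closure of O in L is faithfully flat as an O-module; in particular the induced map of prime spectra Spec(integral closure) → Spec(O) is surjective. -/

import Mathlib

open TensorProduct LinearMap in
lemma aux_flat_of_bezout (R M : Type*) [CommRing R] [IsDomain R] [IsBezout R]
    [AddCommGroup M] [Module R M] [NoZeroSMulDivisors R M] : Module.Flat R M := by
  rw [Module.Flat.iff_rTensor_injective]
  intro I hI
  obtain ⟨a, ha⟩ := IsBezout.isPrincipal_of_FG I hI
  rcases eq_or_ne a 0 with rfl | ha0
  · have hbot : I = ⊥ := by simp [ha, Ideal.span_zero]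
    subst hbot
    have : Subsingleton (⊥ : Ideal R) := by
      constructor; rintro ⟨x, hx⟩ ⟨y, hy⟩
      simp only [Ideal.mem_bot] at hx hy; subst hx; subst hy; rfl
    exact Function.injective_of_subsingleton _
  · subst ha
    set I : Ideal R := Ideal.span {a} with hIdef
    set e : R ≃ₗ[R] I := LinearEquiv.toSpanNonzeroSingleton R R a ha0 with he
    have hcomp : I.subtype ∘ₗ (e : R →ₗ[R] I) = toSpanSingleton R R a := by
      apply LinearMap.ext; intro r
      show ((LinearEquiv.toSpanNonzeroSingleton R R a ha0) r : R) = _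
      rw [LinearEquiv.toSpanNonzeroSingleton_apply]
      simp [smul_eq_mul, toSpanSingleton_apply]
    have hsm : toSpanSingleton R R a = a • (LinearMap.id : R →ₗ[R] R) := by
      apply LinearMap.ext; intro r
      simp [toSpanSingleton_apply, mul_comm, smul_eq_mul]
    have hinj : Function.Injective (rTensor M (toSpanSingleton R R a)) := by
      rw [hsm, rTensor_smul, rTensor_id]
      intro x y hxy
      have hxy' : a • x = a • y := hxy
      have h1 : a • ((TensorProduct.lid R M) x) = a • ((TensorProduct.lid R M) y) := by
        rw [← map_smul, ← map_smul, hxy']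
      exact (TensorProduct.lid R M).injective (smul_right_injective M ha0 h1)
    have hsurj : Function.Surjective (rTensor M (e : R →ₗ[R] I)) := by
      intro z
      exact ⟨(LinearEquiv.rTensor M e).symm z, by
        have : (rTensor M (e : R →ₗ[R] I)) = (LinearEquiv.rTensor M e : _ →ₗ[R] _) := rfl
        rw [this]
        exact (LinearEquiv.rTensor M e).apply_symm_apply z⟩
    rw [← hcomp, rTensor_comp] at hinj
    intro x y hxy
    obtain ⟨x', rfl⟩ := hsurj x
    obtain ⟨y', rfl⟩ := hsurj y
    exact congrArg _ (hinj hxy)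

/-- The integral closure of a valuation ring `O` in an algebraic extension `L` of its
fraction field `K` is faithfully flat as an `O`-module; in particular the induced map
on prime spectra is surjective. -/
theorem statement_1 (O K L : Type*) [CommRing O] [IsDomain O] [ValuationRing O]
    [Field K] [Algebra O K] [IsFractionRing O K]
    [Field L] [Algebra K L] [Algebra.IsAlgebraic K L]
    [Algebra O L] [IsScalarTower O K L] :
    Module.FaithfullyFlat O (integralClosure O L) ∧
      Function.Surjective
        (PrimeSpectrum.comap (algebraMap O (integralClosure O L))) := by
  set A := integralClosure O L
  have hinjL : Function.Injective (algebraMap O L) := by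
    rw [IsScalarTower.algebraMap_eq O K L]
    exact (algebraMap K L).injective.comp (IsFractionRing.injective O K)
  have : NoZeroSMulDivisors O L := ⟨fun {r x} h => by
    rw [Algebra.smul_def, mul_eq_zero] at h
    exact h.imp (fun h => hinjL (by rw [h, map_zero])) id⟩
  have : NoZeroSMulDivisors O A := by
    constructor
    intro r x h
    have h' : r • (x : L) = 0 := congrArg Subtype.val h
    rcases eq_zero_or_eq_zero_of_smul_eq_zero h' with hr | hx
    · exact Or.inl hr
    · exact Or.inr (Subtype.ext hx)
  have flat : Module.Flat O A := aux_flat_of_bezout O A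
  have hint : Algebra.IsIntegral O A := inferInstance
  have hinjA : Function.Injective (algebraMap O A) := by
    intro x y h
    exact hinjL (congrArg Subtype.val h)
  have hintRH : (algebraMap O A).IsIntegral := fun x => Algebra.IsIntegral.isIntegral (R := O) x
  constructor
  · refine { toFlat := flat, submodule_ne_top := fun m hm h => ?_ }
    rw [Ideal.smul_top_eq_map] at h
    have hmap : m.map (algebraMap O A) = ⊤ := by
      rw [Submodule.restrictScalars_eq_top_iff] at h
      exact h
    exact hm.ne_top ((Ideal.map_eq_top_iff (algebraMap O A) hinjA hintRH).mp hmap)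
  · intro x
    have hker : (⊥ : Ideal A).comap (algebraMap O A) ≤ x.asIdeal := by
      intro r hr
      simp only [Ideal.mem_comap, Ideal.mem_bot] at hr
      have : r = 0 := by
        apply hinjA
        rw [hr, map_zero]
      simp [this]
    obtain ⟨Q, -, hQprime, hQ⟩ :=
      Ideal.exists_ideal_over_prime_of_isIntegral x.asIdeal ⊥ hker
    exact ⟨⟨Q, hQprime⟩, PrimeSpectrum.ext hQ⟩
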